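/- Let n ≥ 2, let k be a field, let k⟨X⟩ be the free associative algebra over k on x_1,…,x_n, and let I be the two-sided ideal generated by { x_{σ(1)}⋯x_{σ(n)} − x_1⋯x_n : σ ∈ Sym_n }. Then for every m ≥ 1 and every i with 2 ≤ i ≤ n, the element x_i·x_1^m·x_ε − x_1^m·x_ε·x_i belongs to I, where x_ε = x_1x_2⋯x_n. -/

import Mathlib

/-- The monomial of `k⟨X⟩` corresponding to a word `w` in the generators. -/
noncomputable def wordElem (k : Type) [Field k] {n : ℕ} (w : List (Fin n)) :
    FreeAlgebra k (Fin n) :=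
  (w.map (FreeAlgebra.ι k)).prod

/-- The monomial `x_ε = x_1 x_2 ⋯ x_n` of `k⟨X⟩`. -/
noncomputable def epsElem (k : Type) [Field k] (n : ℕ) : FreeAlgebra k (Fin n) :=
  wordElem k (List.ofFn fun i : Fin n => i)

/-- The set `{ x_{σ(1)} ⋯ x_{σ(n)} − x_1 ⋯ x_n : σ ∈ Sym_n }`. -/
noncomputable def relSet (k : Type) [Field k] (n : ℕ) : Set (FreeAlgebra k (Fin n)) :=
  { p | ∃ σ : Equiv.Perm (Fin n),
      p = wordElem k (List.ofFn fun i => σ i) - epsElem k n }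

section aux
variable {k : Type} [Field k] {n : ℕ}

local notation "I" => TwoSidedIdeal.span (relSet k n)
local notation "ι" => FreeAlgebra.ι k
local notation "ε" => epsElem k n

lemma wordElem_append (a b : List (Fin n)) :
    wordElem k (a ++ b) = wordElem k a * wordElem k b := by
  simp [wordElem]

lemma wordElem_cons (a : Fin n) (l : List (Fin n)) :
    wordElem k (a :: l) = FreeAlgebra.ι k a * wordElem k l := by
  simp [wordElem]

lemma wordElem_singleton (a : Fin n) : wordElem k [a] = FreeAlgebra.ι k a := by
  simp [wordElem]

lemma rel_mem (l : List (Fin n)) (hl : l.Perm (List.ofFn fun i : Fin n => i)) :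
    wordElem k l - epsElem k n ∈ I := by
  have hlen : l.length = n := by simpa using hl.length_eq
  have hnd : l.Nodup := hl.symm.nodup (by
    exact List.nodup_ofFn.mpr Function.injective_id)
  have hinj : Function.Injective (fun i : Fin n => l.get (Fin.cast hlen.symm i)) := by
    intro a b hab
    have := List.nodup_iff_injective_get.mp hnd hab
    simpa [Fin.ext_iff] using this
  set σ : Equiv.Perm (Fin n) :=
    Equiv.ofBijective _ (Finite.injective_iff_bijective.mp hinj) with hσ
  have hofn : (List.ofFn fun i => σ i) = l := by
    apply List.ext_getElem (by simp [hlen])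
    intro j h1 h2
    simp [hσ, Equiv.ofBijective, List.getElem_ofFn]
  exact TwoSidedIdeal.subset_span ⟨σ, by rw [hofn]⟩

lemma trans_mem {a b c : FreeAlgebra k (Fin n)} (h1 : a - b ∈ I) (h2 : b - c ∈ I) :
    a - c ∈ I := by
  have := TwoSidedIdeal.add_mem _ h1 h2
  simpa using this

lemma symm_mem {a b : FreeAlgebra k (Fin n)} (h : a - b ∈ I) : b - a ∈ I := by
  have := TwoSidedIdeal.neg_mem _ h
  simpa using this

lemma mul_left_mem (c : FreeAlgebra k (Fin n)) {a b : FreeAlgebra k (Fin n)}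
    (h : a - b ∈ I) : c * a - c * b ∈ I := by
  rw [← mul_sub]; exact TwoSidedIdeal.mul_mem_left _ _ _ h

lemma mul_right_mem (c : FreeAlgebra k (Fin n)) {a b : FreeAlgebra k (Fin n)}
    (h : a - b ∈ I) : a * c - b * c ∈ I := by
  rw [← sub_mul]; exact TwoSidedIdeal.mul_mem_right _ _ _ h

lemma conv_mem {a b a' b' : FreeAlgebra k (Fin n)} (ha : a = a') (hb : b = b')
    (h : a' - b' ∈ I) : a - b ∈ I := ha ▸ hb ▸ h

/-- Every generator commutes with `x_ε` modulo `I`. -/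
lemma comm_eps (j : Fin n) : ι j * ε - ε * ι j ∈ I := by
  set e : List (Fin n) := List.ofFn fun i : Fin n => i with he
  have hje : j ∈ e := by rw [he]; exact List.mem_ofFn.mpr ⟨j, rfl⟩
  set u := wordElem k (e.erase j) with hu
  have r1 : u * ι j - ε ∈ I := by
    have p1 : (e.erase j ++ [j]).Perm e :=
      (List.perm_append_singleton j _).trans (List.perm_cons_erase hje).symm
    have h := rel_mem (k := k) (e.erase j ++ [j]) p1
    rwa [wordElem_append, wordElem_singleton, ← hu] at h
  have r2 : ι j * u - ε ∈ I := by
    have p2 : (j :: e.erase j).Perm e := (List.perm_cons_erase hje).symm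
    have h := rel_mem (k := k) (j :: e.erase j) p2
    rwa [wordElem_cons, ← hu] at h
  have key : ι j * ε - ε * ι j =
      ι j * -(u * ι j - ε) + (ι j * u - ε) * ι j := by noncomm_ring
  rw [key]
  exact TwoSidedIdeal.add_mem _
    (TwoSidedIdeal.mul_mem_left _ _ _ (TwoSidedIdeal.neg_mem _ r1))
    (TwoSidedIdeal.mul_mem_right _ _ _ r2)

/-- `x_a x_b x_ε ≡ x_b x_a x_ε` modulo `I`. -/
lemma swap_eps (a b : Fin n) (hab : a ≠ b) :
    ι a * ι b * ε - ι b * ι a * ε ∈ I := by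
  set e : List (Fin n) := List.ofFn fun i : Fin n => i with he
  have hae : a ∈ e := by rw [he]; exact List.mem_ofFn.mpr ⟨a, rfl⟩
  have hbe : b ∈ e.erase a := (List.mem_erase_of_ne hab.symm).mpr (by rw [he]; exact List.mem_ofFn.mpr ⟨b, rfl⟩)
  set c := (e.erase a).erase b with hc
  set wc := wordElem k c with hwc
  have pbc : (b :: c).Perm (e.erase a) := (List.perm_cons_erase hbe).symm
  have pabc : (a :: b :: c).Perm e :=
    (pbc.cons a).trans (List.perm_cons_erase hae).symm
  have pbac : (b :: a :: c).Perm e := (List.Perm.swap a b c).trans pabc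
  have pcba : (c ++ [b, a]).Perm e := List.perm_append_comm.trans pbac
  have r3 : wc * ι b * ι a - ε ∈ I := by
    have h := rel_mem (k := k) (c ++ [b, a]) pcba
    rwa [wordElem_append, wordElem_cons, wordElem_singleton, ← hwc, ← mul_assoc] at h
  have r4 : ι a * ι b * wc - ε ∈ I := by
    have h := rel_mem (k := k) (a :: b :: c) pabc
    rwa [wordElem_cons, wordElem_cons, ← hwc, ← mul_assoc] at h
  have r5 : ι b * ι a * wc - ε ∈ I := by
    have h := rel_mem (k := k) (b :: a :: c) pbac
    rwa [wordElem_cons, wordElem_cons, ← hwc, ← mul_assoc] at h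
  have key : ι a * ι b * ε - ι b * ι a * ε =
      (ι a * ι b * -(wc * ι b * ι a - ε) + (ι a * ι b * wc - ε) * (ι b * ι a)) -
      (ι b * ι a * -(wc * ι b * ι a - ε) + (ι b * ι a * wc - ε) * (ι b * ι a)) := by
    noncomm_ring
  rw [key]
  exact TwoSidedIdeal.sub_mem _
    (TwoSidedIdeal.add_mem _
      (TwoSidedIdeal.mul_mem_left _ _ _ (TwoSidedIdeal.neg_mem _ r3))
      (TwoSidedIdeal.mul_mem_right _ _ _ r4))
    (TwoSidedIdeal.add_mem _
      (TwoSidedIdeal.mul_mem_left _ _ _ (TwoSidedIdeal.neg_mem _ r3))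
      (TwoSidedIdeal.mul_mem_right _ _ _ r5))

/-- `x_j^m x_ε ≡ x_ε x_j^m` modulo `I`. -/
lemma comm_eps_pow (j : Fin n) (m : ℕ) : ι j ^ m * ε - ε * ι j ^ m ∈ I := by
  induction m with
  | zero => simpa using TwoSidedIdeal.zero_mem I
  | succ m ih =>
    have s1 : ι j ^ (m + 1) * ε - ι j * (ε * ι j ^ m) ∈ I := by
      refine conv_mem ?_ rfl (mul_left_mem (ι j) ih)
      rw [pow_succ']; noncomm_ring
    have s2 : ι j * (ε * ι j ^ m) - ε * ι j ^ (m + 1) ∈ I := by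
      refine conv_mem ?_ ?_ (mul_right_mem (ι j ^ m) (comm_eps j))
      · noncomm_ring
      · rw [pow_succ']; noncomm_ring
    exact trans_mem s1 s2

/-- `x_i x_j^m x_ε ≡ x_j^m x_i x_ε` modulo `I`. -/
lemma move_pow (i j : Fin n) (hij : i ≠ j) (m : ℕ) :
    ι i * (ι j ^ m * ε) - ι j ^ m * (ι i * ε) ∈ I := by
  induction m with
  | zero => simpa using TwoSidedIdeal.zero_mem I
  | succ m ih =>
    have s1 : ι i * (ι j ^ (m + 1) * ε) - ι i * ι j * ε * ι j ^ m ∈ I := by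
      refine conv_mem ?_ ?_ (mul_left_mem (ι i * ι j) (comm_eps_pow j m))
      · rw [pow_succ']; noncomm_ring
      · noncomm_ring
    have s2 : ι i * ι j * ε * ι j ^ m - ι j * ι i * ε * ι j ^ m ∈ I :=
      mul_right_mem (ι j ^ m) (swap_eps i j hij)
    have s3 : ι j * ι i * ε * ι j ^ m - ι j * (ι i * (ι j ^ m * ε)) ∈ I := by
      refine conv_mem ?_ ?_ (mul_left_mem (ι j * ι i) (symm_mem (comm_eps_pow j m)))
      · noncomm_ring
      · noncomm_ring
    have s4 : ι j * (ι i * (ι j ^ m * ε)) - ι j ^ (m + 1) * (ι i * ε) ∈ I := by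
      refine conv_mem rfl ?_ (mul_left_mem (ι j) ih)
      rw [pow_succ']; noncomm_ring
    exact trans_mem s1 (trans_mem s2 (trans_mem s3 s4))

end aux

/-- For every `m ≥ 1` and every `i` with `2 ≤ i ≤ n` (0-indexed: `i.val ≠ 0`), the element
`x_i · x_1^m · x_ε − x_1^m · x_ε · x_i` lies in the two-sided ideal generated by the
permutation relations. -/
theorem xi_x1pow_eps_mem_span (n : ℕ) (hn : 2 ≤ n) (k : Type) [Field k]
    (m : ℕ) (hm : 1 ≤ m) (i : Fin n) (hi : i.val ≠ 0) :
    FreeAlgebra.ι k i * FreeAlgebra.ι k (⟨0, by omega⟩ : Fin n) ^ m * epsElem k n -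
        FreeAlgebra.ι k (⟨0, by omega⟩ : Fin n) ^ m * epsElem k n * FreeAlgebra.ι k i ∈
      TwoSidedIdeal.span (relSet k n) := by
  set z : Fin n := ⟨0, by omega⟩ with hz
  have hiz : i ≠ z := by
    intro h; apply hi; rw [h]
  have h1 : FreeAlgebra.ι k i * FreeAlgebra.ι k z ^ m * epsElem k n -
      FreeAlgebra.ι k z ^ m * (FreeAlgebra.ι k i * epsElem k n) ∈
      TwoSidedIdeal.span (relSet k n) := by
    refine conv_mem ?_ rfl (move_pow i z hiz m)
    noncomm_ring
  have h2 : FreeAlgebra.ι k z ^ m * (FreeAlgebra.ι k i * epsElem k n) -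
      FreeAlgebra.ι k z ^ m * epsElem k n * FreeAlgebra.ι k i ∈
      TwoSidedIdeal.span (relSet k n) := by
    refine conv_mem rfl ?_ (mul_left_mem (FreeAlgebra.ι k z ^ m) (comm_eps i))
    noncomm_ring
  exact trans_mem h1 h2
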